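/- Let g be a Lorentzian metric on a 4-manifold with orthonormal frame {e_a} and dual coframe {α^a}, inducing coordinates (x^μ, v_a) on the cotangent bundle via p = v_a α^a. Then the Liouville vector field of g takes the form L = η^{ab} v_a e_b^μ ∂_{x^μ} + η^{ab} v_a v_c Γ_b{}^c{}_d ∂_{v_d}, where Γ_a{}^c{}_b = α^c(∇_{e_a} e_b) are the frame connection coefficients of the Levi-Civita connection. -/

import Mathlib

open scoped BigOperators

/-- The Minkowski matrix `η = diag(1,-1,-1,-1)`. -/
def eta : Fin 4 → Fin 4 → ℝ := fun a b =>
  if a = b then (if a = 0 then 1 else -1) else 0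

lemma sum_eta_mul (a : Fin 4) (f : Fin 4 → ℝ) : ∑ b, eta a b * f b = eta a a * f a := by
  fin_cases a <;> simp [Fin.sum_univ_four, eta]

lemma sum_mul_eta (c : Fin 4) (f : Fin 4 → ℝ) : ∑ d, f d * eta d c = eta c c * f c := by
  fin_cases c <;> simp [Fin.sum_univ_four, eta]

lemma eta_sq (a : Fin 4) : eta a a * eta a a = 1 := by
  fin_cases a <;> simp [eta]

lemma delta_sum (γ : Fin 4) (f : Fin 4 → ℝ) :
    ∑ ν, (if ν = γ then (1:ℝ) else 0) * f ν = f γ := by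
  simp [ite_mul]

lemma delta_sum' (c : Fin 4) (f : Fin 4 → ℝ) :
    ∑ d, (if c = d then (1:ℝ) else 0) * f d = f c := by
  simp [ite_mul]

lemma sum_eta_mul2 (f : Fin 4 → Fin 4 → ℝ) :
    ∑ a, ∑ b, eta a b * f a b = ∑ a, eta a a * f a a :=
  Finset.sum_congr rfl fun a _ => sum_eta_mul a (f a)

lemma fact2 (F G : Fin 4 → ℝ) (k : ℝ) :
    ∑ μ, ∑ ν, k * (F μ * G ν) = k * ((∑ μ, F μ) * (∑ ν, G ν)) := by
  rw [Finset.sum_mul_sum, Finset.mul_sum]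
  refine Finset.sum_congr rfl fun μ _ => ?_
  rw [Finset.mul_sum]

/-- Frame form of the Liouville vector field.  Let `e x a μ = e_a{}^μ` be an
orthonormal frame for `g` (so `g^{μν} = η^{ab} e_a{}^μ e_b{}^ν`), `α x a μ = α^a{}_μ` its dual
coframe, and `Γ x a c b = Γ_a{}^c{}_b` the Levi-Civita frame connection coefficients,
characterized by the torsion-free structure equation and metricity.  `De`, `Dα` are the
coordinate partial derivatives of `e`, `α`.  The frame coordinates are `v_a = e_a{}^μ p_μ`.
Conclusion: the components of the canonical Liouville vector field
`L = g^{μν} p_μ ∂_{x^ν} - (1/2) ∂_{x^γ} g^{αβ} p_α p_β ∂_{p_γ}` coincide with those of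
`η^{ab} v_a e_b{}^μ ∂_{x^μ} + η^{ab} v_a v_c Γ_b{}^c{}_d ∂_{v_d}`, expressed in canonical
coordinates `(x, p)` (the `∂_{x^μ}`-at-fixed-`v` and `∂_{v_d}` directions being pushed
forward to the `(x, p)` chart via `p_γ = α^a{}_γ v_a`). -/
theorem liouville_frame_form
    (e α : (Fin 4 → ℝ) → Fin 4 → Fin 4 → ℝ)
    (De Dα : (Fin 4 → ℝ) → Fin 4 → Fin 4 → Fin 4 → ℝ)
    (Γ : (Fin 4 → ℝ) → Fin 4 → Fin 4 → Fin 4 → ℝ)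
    (hDe : ∀ x ν a μ, HasDerivAt (fun t => e (Function.update x ν t) a μ)
        (De x ν a μ) (x ν))
    (hDα : ∀ x ν a μ, HasDerivAt (fun t => α (Function.update x ν t) a μ)
        (Dα x ν a μ) (x ν))
    (hdual : ∀ x a b, (∑ μ, α x a μ * e x b μ) = if a = b then (1 : ℝ) else 0)
    -- torsion-free structure equation: Γ_a{}^c{}_b - Γ_b{}^c{}_a = α^c([e_a, e_b])
    (htor : ∀ x a b c, Γ x a c b - Γ x b c a =
        ∑ μ, α x c μ * (∑ ν, (e x a ν * De x ν b μ - e x b ν * De x ν a μ)))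
    -- metricity: Γ_a{}^d{}_b η_{dc} + Γ_a{}^d{}_c η_{db} = 0
    (hmet : ∀ x a b c, (∑ d, (Γ x a d b * eta d c + Γ x a d c * eta d b)) = 0) :
    ∀ (x p v : Fin 4 → ℝ), (∀ a, v a = ∑ μ, e x a μ * p μ) →
      -- ∂_x components agree:
      (∀ ν, (∑ μ, (∑ a, ∑ b, eta a b * e x a μ * e x b ν) * p μ) =
          ∑ a, ∑ b, eta a b * v a * e x b ν) ∧
      -- ∂_p components agree:
      (∀ γ, -(1 / 2) * (∑ μ, ∑ ν,
            (∑ a, ∑ b, eta a b * (De x γ a μ * e x b ν + e x a μ * De x γ b ν))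
              * p μ * p ν) =
          (∑ a, ∑ b, eta a b * v a *
              (∑ μ, e x b μ * (∑ c, Dα x μ c γ * v c)))
            + ∑ a, ∑ b, ∑ c, ∑ d,
                eta a b * v a * v c * Γ x b c d * α x d γ) := by
  intro x p v hv
  -- completeness at any point
  have compl : ∀ (y : Fin 4 → ℝ) (ν γ' : Fin 4),
      (∑ a, e y a ν * α y a γ') = if ν = γ' then (1:ℝ) else 0 := by
    intro y ν γ'
    let M : Matrix (Fin 4) (Fin 4) ℝ := Matrix.of fun a μ => α y a μ
    let N : Matrix (Fin 4) (Fin 4) ℝ := Matrix.of fun μ b => e y b μ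
    have h1 : M * N = 1 := by
      ext a b
      simp [M, N, Matrix.mul_apply, Matrix.one_apply, hdual y a b]
    have h2 : N * M = 1 := mul_eq_one_comm.mp h1
    have h3 : (N * M) ν γ' = (1 : Matrix (Fin 4) (Fin 4) ℝ) ν γ' := by rw [h2]
    simpa [M, N, Matrix.mul_apply, Matrix.one_apply] using h3
  -- derivative of completeness
  have F4 : ∀ σ ν γ', (∑ d, (De x σ d ν * α x d γ' + e x d ν * Dα x σ d γ')) = 0 := by
    intro σ ν γ'
    have hder : HasDerivAt
        (fun t => ∑ d, e (Function.update x σ t) d ν * α (Function.update x σ t) d γ')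
        (∑ d, (De x σ d ν * α x d γ' + e x d ν * Dα x σ d γ')) (x σ) := by
      refine HasDerivAt.fun_sum fun d _ => ?_
      have := (hDe x σ d ν).fun_mul (hDα x σ d γ')
      simpa [Function.update_eq_self] using this
    have h0 : HasDerivAt
        (fun t => ∑ d, e (Function.update x σ t) d ν * α (Function.update x σ t) d γ')
        0 (x σ) := by
      have : (fun t => ∑ d, e (Function.update x σ t) d ν * α (Function.update x σ t) d γ')
          = fun _ => (if ν = γ' then (1:ℝ) else 0) := funext fun t => compl _ ν γ'
      rw [this]; exact hasDerivAt_const _ _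
    exact hder.unique h0
  -- p in terms of v
  have hp : ∀ μ, p μ = ∑ c, α x c μ * v c := by
    intro μ
    have : ∑ c, α x c μ * v c = ∑ ν, (∑ c, e x c ν * α x c μ) * p ν := by
      calc ∑ c, α x c μ * v c = ∑ c, ∑ ν, e x c ν * α x c μ * p ν := by
            refine Finset.sum_congr rfl fun c _ => ?_
            rw [hv c, Finset.mul_sum]
            exact Finset.sum_congr rfl fun ν _ => by ring
        _ = ∑ ν, ∑ c, e x c ν * α x c μ * p ν := Finset.sum_comm
        _ = ∑ ν, (∑ c, e x c ν * α x c μ) * p ν := by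
            refine Finset.sum_congr rfl fun ν _ => ?_
            rw [Finset.sum_mul]
    rw [this]
    simp only [compl x]
    rw [delta_sum μ p]
  -- metricity pointwise
  have hmet' : ∀ a b c, eta c c * Γ x a c b + eta b b * Γ x a b c = 0 := by
    intro a b c
    have h := hmet x a b c
    rw [Finset.sum_add_distrib, sum_mul_eta c (fun d => Γ x a d b),
      sum_mul_eta b (fun d => Γ x a d c)] at h
    linarith
  constructor
  · -- part 1
    intro ν
    calc ∑ μ, (∑ a, ∑ b, eta a b * e x a μ * e x b ν) * p μ
        = ∑ μ, ∑ a, ∑ b, eta a b * e x a μ * e x b ν * p μ := by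
          refine Finset.sum_congr rfl fun μ _ => ?_
          rw [Finset.sum_mul]
          exact Finset.sum_congr rfl fun a _ => by rw [Finset.sum_mul]
      _ = ∑ a, ∑ μ, ∑ b, eta a b * e x a μ * e x b ν * p μ := Finset.sum_comm
      _ = ∑ a, ∑ b, ∑ μ, eta a b * e x a μ * e x b ν * p μ :=
          Finset.sum_congr rfl fun a _ => Finset.sum_comm
      _ = ∑ a, ∑ b, eta a b * v a * e x b ν := by
          refine Finset.sum_congr rfl fun a _ => Finset.sum_congr rfl fun b _ => ?_
          rw [hv a, Finset.mul_sum, Finset.sum_mul]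
          exact Finset.sum_congr rfl fun μ _ => by ring
  · -- part 2
    intro γ
    -- delta contraction lemmas
    have hdeltaE : ∀ (f : Fin 4 → ℝ) (γ' : Fin 4),
        (∑ ν, (∑ d, e x d ν * α x d γ') * f ν) = f γ' := by
      intro f γ'
      simp only [compl x]
      exact delta_sum γ' f
    have hdualC : ∀ (c : Fin 4) (f : Fin 4 → ℝ),
        (∑ d, (∑ μ, α x c μ * e x d μ) * f d) = f c := by
      intro c f
      simp only [hdual x]
      exact delta_sum' c f
    have hF4' : ∀ σ μ', (∑ d, De x σ d μ' * α x d γ) = -(∑ d, e x d μ' * Dα x σ d γ) := by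
      intro σ μ'
      have h := F4 σ μ' γ
      rw [Finset.sum_add_distrib] at h
      linarith
    -- the contracted torsion identity
    have CT : ∀ a c, (∑ d, α x d γ * (Γ x a c d - Γ x d c a))
        = -((∑ μ, α x c μ * De x γ a μ) + (∑ μ, e x a μ * Dα x μ c γ)) := by
      intro a c
      have hTB : (∑ μ, α x c μ * ((∑ ν, (∑ d, e x d ν * α x d γ) * De x ν a μ)))
          = ∑ μ, α x c μ * De x γ a μ := by
        refine Finset.sum_congr rfl fun μ _ => ?_
        exact congrArg (fun z => α x c μ * z) (hdeltaE (fun ν => De x ν a μ) γ)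
      have hTA : (∑ μ, ∑ ν, α x c μ * e x a ν * (∑ d, De x ν d μ * α x d γ))
          = -(∑ μ, e x a μ * Dα x μ c γ) := by
        calc ∑ μ, ∑ ν, α x c μ * e x a ν * (∑ d, De x ν d μ * α x d γ)
            = ∑ μ, ∑ ν, ∑ d, -(α x c μ * e x d μ * (e x a ν * Dα x ν d γ)) := by
              refine Finset.sum_congr rfl fun μ _ => Finset.sum_congr rfl fun ν _ => ?_
              rw [hF4' ν μ, mul_neg, Finset.mul_sum, ← Finset.sum_neg_distrib]
              exact Finset.sum_congr rfl fun d _ => by ring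
          _ = ∑ ν, ∑ d, ∑ μ, -(α x c μ * e x d μ * (e x a ν * Dα x ν d γ)) := by
              rw [Finset.sum_comm]
              exact Finset.sum_congr rfl fun ν _ => Finset.sum_comm
          _ = ∑ ν, -(∑ d, (∑ μ, α x c μ * e x d μ) * (e x a ν * Dα x ν d γ)) := by
              refine Finset.sum_congr rfl fun ν _ => ?_
              rw [← Finset.sum_neg_distrib]
              refine Finset.sum_congr rfl fun d _ => ?_
              rw [Finset.sum_mul, ← Finset.sum_neg_distrib]
          _ = ∑ ν, -(e x a ν * Dα x ν c γ) := by
              refine Finset.sum_congr rfl fun ν _ => ?_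
              exact congrArg (fun z => -z) (hdualC c (fun d => e x a ν * Dα x ν d γ))
          _ = -(∑ μ, e x a μ * Dα x μ c γ) := Finset.sum_neg_distrib _
      calc ∑ d, α x d γ * (Γ x a c d - Γ x d c a)
          = ∑ d, ∑ μ, ∑ ν, (α x c μ * e x a ν * (De x ν d μ * α x d γ)
              - α x c μ * ((e x d ν * α x d γ) * De x ν a μ)) := by
            refine Finset.sum_congr rfl fun d _ => ?_
            rw [htor x a d c, Finset.mul_sum]
            refine Finset.sum_congr rfl fun μ _ => ?_
            rw [← mul_assoc, Finset.mul_sum]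
            exact Finset.sum_congr rfl fun ν _ => by ring
        _ = ∑ μ, ∑ ν, ∑ d, (α x c μ * e x a ν * (De x ν d μ * α x d γ)
              - α x c μ * ((e x d ν * α x d γ) * De x ν a μ)) := by
            rw [Finset.sum_comm]
            exact Finset.sum_congr rfl fun μ _ => Finset.sum_comm
        _ = (∑ μ, ∑ ν, α x c μ * e x a ν * (∑ d, De x ν d μ * α x d γ))
              - (∑ μ, α x c μ * (∑ ν, (∑ d, e x d ν * α x d γ) * De x ν a μ)) := by
            simp only [Finset.mul_sum, Finset.sum_mul, ← Finset.sum_sub_distrib]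
        _ = -((∑ μ, α x c μ * De x γ a μ) + (∑ μ, e x a μ * Dα x μ c γ)) := by
            rw [hTA, hTB]; ring
    -- metricity consequence
    have hmetN : ∀ d a c, eta a a * Γ x d c a + eta c c * Γ x d a c = 0 := by
      intro d a c
      have I1 := hmet' d c a
      have sa := eta_sq a
      have sc := eta_sq c
      linear_combination (eta a a * eta c c) * I1 - (eta c c * Γ x d a c) * sa
        - (eta a a * Γ x d c a) * sc
    -- the key pointwise identity
    have key : ∀ a c,
        eta a a * ((∑ μ, α x c μ * De x γ a μ) + (∑ μ, e x a μ * Dα x μ c γ)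
            + (∑ d, Γ x a c d * α x d γ))
          + eta c c * ((∑ μ, α x a μ * De x γ c μ) + (∑ μ, e x c μ * Dα x μ a γ)
            + (∑ d, Γ x c a d * α x d γ)) = 0 := by
      intro a c
      have h1 := CT a c
      have h2 := CT c a
      have hz : eta a a * (∑ d, Γ x a c d * α x d γ) + eta c c * (∑ d, Γ x c a d * α x d γ)
          - (eta a a * (∑ d, α x d γ * (Γ x a c d - Γ x d c a))
             + eta c c * (∑ d, α x d γ * (Γ x c a d - Γ x d a c)))
          = ∑ d, α x d γ * (eta a a * Γ x d c a + eta c c * Γ x d a c) := by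
        simp only [Finset.mul_sum, ← Finset.sum_add_distrib, ← Finset.sum_sub_distrib]
        exact Finset.sum_congr rfl fun d _ => by ring
      have hz0 : (∑ d, α x d γ * (eta a a * Γ x d c a + eta c c * Γ x d a c)) = 0 :=
        Finset.sum_eq_zero fun d _ => by rw [hmetN d a c, mul_zero]
      linear_combination eta a a * h1 + eta c c * h2 + hz + hz0
    -- reduce LHS of the goal
    have hW : ∀ a, (∑ μ, De x γ a μ * p μ)
        = ∑ c, v c * (∑ μ, α x c μ * De x γ a μ) := by
      intro a
      calc ∑ μ, De x γ a μ * p μ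
          = ∑ μ, ∑ c, De x γ a μ * (α x c μ * v c) := by
            refine Finset.sum_congr rfl fun μ _ => ?_
            rw [hp μ, Finset.mul_sum]
        _ = ∑ c, ∑ μ, De x γ a μ * (α x c μ * v c) := Finset.sum_comm
        _ = ∑ c, v c * (∑ μ, α x c μ * De x γ a μ) := by
            refine Finset.sum_congr rfl fun c _ => ?_
            rw [Finset.mul_sum]
            exact Finset.sum_congr rfl fun μ _ => by ring
    have hL : -(1 / 2 : ℝ) * (∑ μ, ∑ ν,
          (∑ a, ∑ b, eta a b * (De x γ a μ * e x b ν + e x a μ * De x γ b ν))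
            * p μ * p ν)
        = -(∑ a, ∑ c, eta a a * v a * v c * (∑ μ, α x c μ * De x γ a μ)) := by
      have hS : (∑ μ, ∑ ν,
            (∑ a, ∑ b, eta a b * (De x γ a μ * e x b ν + e x a μ * De x γ b ν))
              * p μ * p ν)
          = ∑ a, ∑ c, 2 * (eta a a * v a * v c * (∑ μ, α x c μ * De x γ a μ)) := by
        calc (∑ μ, ∑ ν,
            (∑ a, ∑ b, eta a b * (De x γ a μ * e x b ν + e x a μ * De x γ b ν))
              * p μ * p ν)
            = ∑ μ, ∑ ν, ∑ a,
                eta a a * (De x γ a μ * e x a ν + e x a μ * De x γ a ν) * p μ * p ν := by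
              refine Finset.sum_congr rfl fun μ _ => Finset.sum_congr rfl fun ν _ => ?_
              rw [sum_eta_mul2 (fun a b => De x γ a μ * e x b ν + e x a μ * De x γ b ν),
                Finset.sum_mul, Finset.sum_mul]
          _ = ∑ μ, ∑ a, ∑ ν,
                eta a a * (De x γ a μ * e x a ν + e x a μ * De x γ a ν) * p μ * p ν :=
              Finset.sum_congr rfl fun μ _ => Finset.sum_comm
          _ = ∑ a, ∑ μ, ∑ ν,
                eta a a * (De x γ a μ * e x a ν + e x a μ * De x γ a ν) * p μ * p ν :=
              Finset.sum_comm
          _ = ∑ a, ((∑ μ, ∑ ν, eta a a * ((De x γ a μ * p μ) * (e x a ν * p ν)))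
                + (∑ μ, ∑ ν, eta a a * ((e x a μ * p μ) * (De x γ a ν * p ν)))) := by
              refine Finset.sum_congr rfl fun a _ => ?_
              rw [← Finset.sum_add_distrib]
              refine Finset.sum_congr rfl fun μ _ => ?_
              rw [← Finset.sum_add_distrib]
              exact Finset.sum_congr rfl fun ν _ => by ring
          _ = ∑ a, (eta a a * ((∑ μ, De x γ a μ * p μ) * (∑ ν, e x a ν * p ν))
                + eta a a * ((∑ μ, e x a μ * p μ) * (∑ ν, De x γ a ν * p ν))) := by
              refine Finset.sum_congr rfl fun a _ => ?_
              rw [fact2, fact2]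
          _ = ∑ a, ∑ c, 2 * (eta a a * v a * v c * (∑ μ, α x c μ * De x γ a μ)) := by
              refine Finset.sum_congr rfl fun a _ => ?_
              rw [← hv a, hW a, Finset.sum_mul, Finset.mul_sum, Finset.mul_sum,
                Finset.mul_sum, ← Finset.sum_add_distrib]
              exact Finset.sum_congr rfl fun c _ => by ring
      rw [hS]
      simp only [Finset.mul_sum, ← Finset.sum_neg_distrib]
      exact Finset.sum_congr rfl fun a _ => Finset.sum_congr rfl fun c _ =>
        Finset.sum_congr rfl fun μ _ => by ring
    have hR1 : (∑ a, ∑ b, eta a b * v a * (∑ μ, e x b μ * (∑ c, Dα x μ c γ * v c)))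
        = ∑ a, ∑ c, eta a a * v a * v c * (∑ μ, e x a μ * Dα x μ c γ) := by
      refine Finset.sum_congr rfl fun a _ => ?_
      calc ∑ b, eta a b * v a * (∑ μ, e x b μ * (∑ c, Dα x μ c γ * v c))
          = ∑ b, eta a b * (v a * (∑ μ, e x b μ * (∑ c, Dα x μ c γ * v c))) :=
            Finset.sum_congr rfl fun b _ => by ring
        _ = eta a a * (v a * (∑ μ, e x a μ * (∑ c, Dα x μ c γ * v c))) :=
            sum_eta_mul a _
        _ = ∑ μ, ∑ c, eta a a * (v a * (e x a μ * (Dα x μ c γ * v c))) := by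
            rw [Finset.mul_sum, Finset.mul_sum]
            refine Finset.sum_congr rfl fun μ _ => ?_
            rw [Finset.mul_sum, Finset.mul_sum, Finset.mul_sum]
        _ = ∑ c, ∑ μ, eta a a * (v a * (e x a μ * (Dα x μ c γ * v c))) := Finset.sum_comm
        _ = ∑ c, eta a a * v a * v c * (∑ μ, e x a μ * Dα x μ c γ) := by
            refine Finset.sum_congr rfl fun c _ => ?_
            rw [Finset.mul_sum]
            exact Finset.sum_congr rfl fun μ _ => by ring
    have hR2 : (∑ a, ∑ b, ∑ c, ∑ d, eta a b * v a * v c * Γ x b c d * α x d γ)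
        = ∑ a, ∑ c, eta a a * v a * v c * (∑ d, Γ x a c d * α x d γ) := by
      refine Finset.sum_congr rfl fun a _ => ?_
      calc ∑ b, ∑ c, ∑ d, eta a b * v a * v c * Γ x b c d * α x d γ
          = ∑ b, eta a b * (∑ c, ∑ d, v a * v c * Γ x b c d * α x d γ) := by
            refine Finset.sum_congr rfl fun b _ => ?_
            rw [Finset.mul_sum]
            refine Finset.sum_congr rfl fun c _ => ?_
            rw [Finset.mul_sum]
            exact Finset.sum_congr rfl fun d _ => by ring
        _ = eta a a * (∑ c, ∑ d, v a * v c * Γ x a c d * α x d γ) := sum_eta_mul a _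
        _ = ∑ c, eta a a * v a * v c * (∑ d, Γ x a c d * α x d γ) := by
            rw [Finset.mul_sum]
            refine Finset.sum_congr rfl fun c _ => ?_
            rw [Finset.mul_sum, Finset.mul_sum]
            exact Finset.sum_congr rfl fun d _ => by ring
    have hkeysum : (∑ a, ∑ c, eta a a * v a * v c * (∑ μ, α x c μ * De x γ a μ))
        + (∑ a, ∑ c, eta a a * v a * v c * (∑ μ, e x a μ * Dα x μ c γ))
        + (∑ a, ∑ c, eta a a * v a * v c * (∑ d, Γ x a c d * α x d γ)) = 0 := by
      have hQ1 : (∑ a, ∑ c, eta a a * v a * v c * (∑ μ, α x c μ * De x γ a μ))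
          + (∑ a, ∑ c, eta a a * v a * v c * (∑ μ, e x a μ * Dα x μ c γ))
          + (∑ a, ∑ c, eta a a * v a * v c * (∑ d, Γ x a c d * α x d γ))
          = ∑ a, ∑ c, eta a a * v a * v c * ((∑ μ, α x c μ * De x γ a μ)
              + (∑ μ, e x a μ * Dα x μ c γ) + (∑ d, Γ x a c d * α x d γ)) := by
        simp only [← Finset.sum_add_distrib]
        exact Finset.sum_congr rfl fun a _ => Finset.sum_congr rfl fun c _ => by
          rw [Finset.sum_add_distrib, Finset.sum_add_distrib]; ring
      have hQ2 : (∑ a, ∑ c, eta a a * v a * v c * ((∑ μ, α x c μ * De x γ a μ)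
              + (∑ μ, e x a μ * Dα x μ c γ) + (∑ d, Γ x a c d * α x d γ)))
          = ∑ c, ∑ a, eta a a * v a * v c * ((∑ μ, α x c μ * De x γ a μ)
              + (∑ μ, e x a μ * Dα x μ c γ) + (∑ d, Γ x a c d * α x d γ)) :=
        Finset.sum_comm
      have hQ3 : (∑ a, ∑ c, eta a a * v a * v c * ((∑ μ, α x c μ * De x γ a μ)
              + (∑ μ, e x a μ * Dα x μ c γ) + (∑ d, Γ x a c d * α x d γ)))
            * 2
          = ∑ a, ∑ c, (v a * v c) *
              (eta a a * ((∑ μ, α x c μ * De x γ a μ)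
                + (∑ μ, e x a μ * Dα x μ c γ) + (∑ d, Γ x a c d * α x d γ))
              + eta c c * ((∑ μ, α x a μ * De x γ c μ)
                + (∑ μ, e x c μ * Dα x μ a γ) + (∑ d, Γ x c a d * α x d γ))) := by
        rw [mul_two]
        nth_rewrite 2 [hQ2]
        rw [← Finset.sum_add_distrib]
        refine Finset.sum_congr rfl fun a _ => ?_
        rw [← Finset.sum_add_distrib]
        exact Finset.sum_congr rfl fun c _ => by ring
      have hQ4 : (∑ a, ∑ c, eta a a * v a * v c * ((∑ μ, α x c μ * De x γ a μ)
              + (∑ μ, e x a μ * Dα x μ c γ) + (∑ d, Γ x a c d * α x d γ))) = 0 := by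
        have h20 : (∑ a, ∑ c, eta a a * v a * v c * ((∑ μ, α x c μ * De x γ a μ)
              + (∑ μ, e x a μ * Dα x μ c γ) + (∑ d, Γ x a c d * α x d γ))) * 2 = 0 := by
          rw [hQ3]
          refine Finset.sum_eq_zero fun a _ => Finset.sum_eq_zero fun c _ => ?_
          rw [key a c, mul_zero]
        linarith
      rw [hQ1, hQ4]
    rw [hL, hR1, hR2]
    linarith [hkeysum]
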